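/- Let (A•, ∂) be a differential graded algebra and suppose there is a second degree-1 differential ∂_J anticommuting with ∂ such that ker ∂_J is a subalgebra and the ∂∂_J-lemma holds. Then the DGA (A•, ∂) is formal: it is connected to a DGA with zero differential by a zigzag of quasi-isomorphisms, namely (A•, ∂) ← (A• ∩ ker ∂_J, ∂) → (H•_{∂_J}, 0). -/
import Mathlib


/-- **Theorem 4.1 (formality).** Let `(A•, ∂)` be a differential graded algebra with a
second degree-1 differential `∂_J` anticommuting with `∂`, such that `ker ∂_J` is a
subalgebra and the `∂∂_J`-lemma holds. Then `(A•, ∂)` is formal: it is connected to a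
DGA with zero differential by the zigzag of quasi-isomorphisms
`(A•, ∂) ← (A• ∩ ker ∂_J, ∂) → (H•_{∂_J}, 0)`. The conclusion states: (1) the
inclusion is a quasi-isomorphism, (2) the differential induced by `∂` on `H•_{∂_J}`
is zero, and (3) the projection onto `(H•_{∂_J}, 0)` is a quasi-isomorphism. -/
theorem ddJ_lemma_implies_formal
    {V : Type*} [Ring V] [Algebra ℂ V]
    (A : ℕ → Submodule ℂ V)
    (del delJ : Module.End ℂ V)
    -- degree-1 operators
    (hdeldeg : ∀ p, ∀ x ∈ A p, del x ∈ A (p + 1))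
    (hdelJdeg : ∀ p, ∀ x ∈ A p, delJ x ∈ A (p + 1))
    -- differentials of a DGA: Leibniz rules with graded sign
    (hLeib : ∀ (p : ℕ) (x y : V), x ∈ A p →
      del (x * y) = del x * y + ((-1 : ℂ) ^ p) • (x * del y))
    (hLeibJ : ∀ (p : ℕ) (x y : V), x ∈ A p →
      delJ (x * y) = delJ x * y + ((-1 : ℂ) ^ p) • (x * delJ y))
    (hd2 : del * del = 0) (hdJ2 : delJ * delJ = 0)
    (hanti : del * delJ + delJ * del = 0)
    -- ker ∂_J is a subalgebra
    (hker : ∀ x y : V, delJ x = 0 → delJ y = 0 → delJ (x * y) = 0)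
    -- the ∂∂_J-lemma
    (hlemma : ∀ α : V, del α = 0 → delJ α = 0 → (∃ β γ : V, α = del β + delJ γ) →
      ∃ η : V, α = del (delJ η)) :
    -- (1) the inclusion (A ∩ ker ∂_J, ∂) → (A, ∂) is a quasi-isomorphism
    ((∀ α : V, delJ α = 0 → del α = 0 → (∃ β : V, α = del β) →
        ∃ γ : V, delJ γ = 0 ∧ α = del γ) ∧
      (∀ α : V, del α = 0 → ∃ γ β : V, delJ γ = 0 ∧ α = γ + del β)) ∧
    -- (2) the induced differential on H_{∂_J} is zero
    (∀ α : V, delJ α = 0 → ∃ β : V, del α = delJ β) ∧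
    -- (3) the projection (A ∩ ker ∂_J, ∂) → (H_{∂_J}, 0) is a quasi-isomorphism
    ((∀ α : V, delJ α = 0 → del α = 0 → (∃ ν : V, α = delJ ν) →
        ∃ γ : V, delJ γ = 0 ∧ α = del γ) ∧
      (∀ α : V, delJ α = 0 →
        ∃ β ν : V, delJ β = 0 ∧ del β = 0 ∧ α = β + delJ ν)) := by
  have hd2' : ∀ x : V, del (del x) = 0 := fun x => by
    simpa [Module.End.mul_apply] using DFunLike.congr_fun hd2 x
  have hdJ2' : ∀ x : V, delJ (delJ x) = 0 := fun x => by
    simpa [Module.End.mul_apply] using DFunLike.congr_fun hdJ2 x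
  have hanti' : ∀ x : V, del (delJ x) = - delJ (del x) := fun x => by
    have h := DFunLike.congr_fun hanti x
    simp only [LinearMap.add_apply, Module.End.mul_apply, LinearMap.zero_apply] at h
    exact eq_neg_of_add_eq_zero_left h
  refine ⟨⟨?_, ?_⟩, ?_, ?_, ?_⟩
  · rintro α hJ hd ⟨β, hβ⟩
    obtain ⟨η, hη⟩ := hlemma α hd hJ ⟨β, 0, by simp [hβ]⟩
    exact ⟨delJ η, hdJ2' η, hη⟩
  · intro α hd
    have h1 : del (delJ α) = 0 := by rw [hanti' α, hd, map_zero, neg_zero]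
    obtain ⟨η, hη⟩ := hlemma (delJ α) h1 (hdJ2' α) ⟨0, α, by simp⟩
    refine ⟨α + del η, -η, ?_, by simp⟩
    have h2 : delJ (del η) = - del (delJ η) := by rw [hanti' η, neg_neg]
    rw [map_add, h2, ← hη, add_neg_cancel]
  · intro α hJ
    have h1 : delJ (del α) = 0 := by
      have := hanti' α
      rw [hJ, map_zero] at this
      exact neg_eq_zero.mp this.symm
    obtain ⟨η, hη⟩ := hlemma (del α) (hd2' α) h1 ⟨α, 0, by simp⟩
    refine ⟨-del η, ?_⟩
    rw [map_neg, hη, hanti' η]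
  · rintro α hJ hd ⟨ν, hν⟩
    obtain ⟨η, hη⟩ := hlemma α hd hJ ⟨0, ν, by simp [hν]⟩
    exact ⟨delJ η, hdJ2' η, hη⟩
  · intro α hJ
    have h1 : delJ (del α) = 0 := by
      have := hanti' α
      rw [hJ, map_zero] at this
      exact neg_eq_zero.mp this.symm
    obtain ⟨η, hη⟩ := hlemma (del α) (hd2' α) h1 ⟨α, 0, by simp⟩
    refine ⟨α - delJ η, η, by rw [map_sub, hJ, hdJ2', sub_zero], ?_, by abel⟩
    rw [map_sub, hη, sub_self]
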